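/- For the function h(I₁,I₂,I₃,I₄) = I₂⁵/5 + I₁³/3 − I₁²/2 + I₁I₂/2 − I₃²/2 − I₄, every vector v ∈ ℝ⁴ with v ≠ 0 satisfying h¹[v] = 0, h²[v,v] = 0, and h³[v,v,v] = 0 at the origin is of the form v = (0, v₂, 0, 0) with v₂ ≠ 0. -/

import Mathlib

set_option synthInstance.maxHeartbeats 1000000
set_option maxHeartbeats 1000000
open ContinuousLinearMap

/-- The function `h(I) = I₂⁵/5 + I₁³/3 − I₁²/2 + I₁I₂/2 − I₃²/2 − I₄`. -/
noncomputable def h : (Fin 4 → ℝ) → ℝ :=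
  fun I => (I 1) ^ 5 / 5 + (I 0) ^ 3 / 3 - (I 0) ^ 2 / 2
    + (I 0) * (I 1) / 2 - (I 2) ^ 2 / 2 - I 3

/-- projection CLM -/
noncomputable def pr (i : Fin 4) : (Fin 4 → ℝ) →L[ℝ] ℝ := ContinuousLinearMap.proj i

lemma hasFDerivAt_pow_apply (n : ℕ) (i : Fin 4) (x : Fin 4 → ℝ) :
    HasFDerivAt (fun y : Fin 4 → ℝ => (y i) ^ n) (((n : ℝ) * (x i) ^ (n - 1)) • pr i) x :=
  (hasDerivAt_pow n (x i)).comp_hasFDerivAt x (hasFDerivAt_apply i x)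

/-- first derivative of `h` -/
noncomputable def D1 (x : Fin 4 → ℝ) : (Fin 4 → ℝ) →L[ℝ] ℝ :=
  (x 0 ^ 2 - x 0 + (1/2) * x 1) • pr 0 + (x 1 ^ 4 + (1/2) * x 0) • pr 1
    - (x 2) • pr 2 - pr 3

noncomputable def M (i j : Fin 4) : (Fin 4 → ℝ) →L[ℝ] (Fin 4 → ℝ) →L[ℝ] ℝ :=
  (pr i).smulRight (pr j)

/-- second derivative of `h` -/
noncomputable def D2 (x : Fin 4 → ℝ) : (Fin 4 → ℝ) →L[ℝ] (Fin 4 → ℝ) →L[ℝ] ℝ :=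
  (2 * x 0) • M 0 0 + (4 * x 1 ^ 3) • M 1 1
    + ((-1 : ℝ) • M 0 0 + (1/2 : ℝ) • M 1 0 + (1/2 : ℝ) • M 0 1 - M 2 2)

lemma hasFDerivAt_h (x : Fin 4 → ℝ) : HasFDerivAt h (D1 x) x := by
  have e : h = fun y : Fin 4 → ℝ =>
      (1/5) * (y 1) ^ 5 + (1/3) * (y 0) ^ 3 - (1/2) * (y 0) ^ 2
        + (1/2) * ((y 0) * (y 1)) - (1/2) * (y 2) ^ 2 - y 3 := by
    funext y; simp only [h]; ring
  rw [e]
  have H := ((((((hasFDerivAt_pow_apply 5 1 x).const_mul (1/5)).add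
      ((hasFDerivAt_pow_apply 3 0 x).const_mul (1/3))).sub
      ((hasFDerivAt_pow_apply 2 0 x).const_mul (1/2))).add
      (((hasFDerivAt_apply 0 x).mul (hasFDerivAt_apply 1 x)).const_mul (1/2))).sub
      ((hasFDerivAt_pow_apply 2 2 x).const_mul (1/2))).sub (hasFDerivAt_apply 3 x)
  refine H.congr_fderiv ?_
  refine ContinuousLinearMap.ext fun w => ?_
  simp [D1, pr]
  ring

lemma fderiv_h_eq : fderiv ℝ h = D1 := funext fun x => (hasFDerivAt_h x).fderiv

lemma hasFDerivAt_D1 (x : Fin 4 → ℝ) : HasFDerivAt D1 (D2 x) x := by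
  have H := (((((((hasFDerivAt_pow_apply 2 0 x).sub (hasFDerivAt_apply 0 x)).add
      ((hasFDerivAt_apply 1 x).const_mul (1/2))).smul_const (pr 0)).add
      (((hasFDerivAt_pow_apply 4 1 x).add
        ((hasFDerivAt_apply 0 x).const_mul (1/2))).smul_const (pr 1))).sub
      ((hasFDerivAt_apply 2 x).smul_const (pr 2))).sub_const (pr 3))
  have e : D1 = fun y : Fin 4 → ℝ =>
      (y 0 ^ 2 - y 0 + (1/2) * y 1) • pr 0 + (y 1 ^ 4 + (1/2) * y 0) • pr 1
        - (y 2) • pr 2 - pr 3 := rfl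
  rw [e]
  refine H.congr_fderiv ?_
  refine ContinuousLinearMap.ext fun w => ContinuousLinearMap.ext fun u => ?_
  simp [D2, M, pr]
  ring

lemma fderiv_D1_eq : fderiv ℝ D1 = D2 := funext fun x => (hasFDerivAt_D1 x).fderiv

noncomputable def D3 : (Fin 4 → ℝ) →L[ℝ] (Fin 4 → ℝ) →L[ℝ] (Fin 4 → ℝ) →L[ℝ] ℝ :=
  ((2:ℝ) • pr 0).smulRight (M 0 0)

lemma hasFDerivAt_D2 : HasFDerivAt D2 D3 0 := by
  haveI : IsBoundedSMul ℝ ((Fin 4 → ℝ) →L[ℝ] (Fin 4 → ℝ) →L[ℝ] ℝ) :=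
    @NormedSpace.toIsBoundedSMul ℝ ((Fin 4 → ℝ) →L[ℝ] (Fin 4 → ℝ) →L[ℝ] ℝ) _ _ _
  have H := ((((hasFDerivAt_apply 0 (0 : Fin 4 → ℝ)).const_mul 2).smul_const (M 0 0)).add
      (((hasFDerivAt_pow_apply 3 1 (0 : Fin 4 → ℝ)).const_mul 4).smul_const (M 1 1))).add_const
      ((-1 : ℝ) • M 0 0 + (1/2 : ℝ) • M 1 0 + (1/2 : ℝ) • M 0 1 - M 2 2)
  refine H.congr_fderiv ?_
  refine ContinuousLinearMap.ext fun w => ContinuousLinearMap.ext fun u =>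
    ContinuousLinearMap.ext fun z => ?_
  simp [D3, M, pr]

/-- Every nonzero `v` on which `h` is three-jet degenerate at the origin has the
form `v = (0, v₂, 0, 0)` with `v₂ ≠ 0`. -/
theorem three_jet_degenerate_directions :
    ∀ v : Fin 4 → ℝ, v ≠ 0 →
      fderiv ℝ h 0 v = 0 →
      iteratedFDeriv ℝ 2 h 0 ![v, v] = 0 →
      iteratedFDeriv ℝ 3 h 0 ![v, v, v] = 0 →
      ∃ v₂ : ℝ, v₂ ≠ 0 ∧ v = ![0, v₂, 0, 0] := by
  intro v hv h1 h2 h3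
  rw [fderiv_h_eq] at h1
  rw [iteratedFDeriv_two_apply, fderiv_h_eq, fderiv_D1_eq] at h2
  rw [iteratedFDeriv_succ_apply_right, iteratedFDeriv_two_apply] at h3
  simp only [show (fun y => fderiv ℝ h y) = D1 from fderiv_h_eq, fderiv_D1_eq] at h3
  rw [hasFDerivAt_D2.fderiv] at h3
  -- extract scalar equations
  have e1 : v 3 = 0 := by
    simpa [D1, pr] using h1
  have e3 : v 0 = 0 := by
    have := h3
    simp [D3, Fin.init, Fin.last, pr, M, Matrix.cons_val_zero, Matrix.cons_val_one, Matrix.head_cons] at this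
    nlinarith [this]
  have e2 : v 2 = 0 := by
    have := h2
    simp [D2, M, pr, e3, Matrix.cons_val_zero, Matrix.cons_val_one] at this
    nlinarith [this]
  refine ⟨v 1, ?_, ?_⟩
  · intro hz
    apply hv
    funext i
    fin_cases i <;> simp [e1, e2, e3, hz]
  · funext i
    fin_cases i <;> simp [e1, e2, e3]
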